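/- There exist constants C > 0 and β₀ > 0 with the following property. For every Δ > 0 and σ > 0 with β := Δ² / (2σ²) ≤ β₀, if X is a random variable uniformly distributed on the two-point set {−Δ/2, Δ/2} ⊂ ℝ and Y = X + Z where Z is a Gaussian random variable with mean 0 and variance σ² independent of X, then the mutual information satisfies I(X; Y) ≥ β/4 − C β². Consequently, the upper bound I ≤ Δ²/(2σ²) for the Gaussian mechanism is tight up to a universal constant factor as β → 0. -/

import Mathlib

open MeasureTheory ProbabilityTheory Real
open scoped ENNReal NNReal Classical

/-- Kullback–Leibler divergence of probability measures. -/
noncomputable def klDiv {α : Type*} [MeasurableSpace α] (μ ν : Measure α) : ℝ≥0∞ :=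
  if μ ≪ ν ∧ Integrable (llr μ ν) μ then ENNReal.ofReal (∫ x, llr μ ν x ∂μ) else ⊤

/-- Mutual information of two random variables: the KL divergence between the joint law
and the product of the marginal laws. -/
noncomputable def mutualInfo {Ω α β : Type*} [MeasurableSpace Ω] [MeasurableSpace α]
    [MeasurableSpace β] (P : Measure Ω) (X : Ω → α) (Y : Ω → β) : ℝ≥0∞ :=
  klDiv (P.map fun ω => (X ω, Y ω)) ((P.map X).prod (P.map Y))


lemma gauss_pdf_shift {v : ℝ≥0} (hv : v ≠ 0) (s x : ℝ) :
    rexp (s * x) * gaussianPDFReal 0 v x = rexp ((v:ℝ) * s^2 / 2) * gaussianPDFReal ((v:ℝ)*s) v x := by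
  have hv' : (v:ℝ) ≠ 0 := by exact_mod_cast hv
  simp only [gaussianPDFReal]
  have h1 : rexp (s*x) * ((√(2*π*(v:ℝ)))⁻¹ * rexp (-(x-0)^2/(2*(v:ℝ))))
      = (√(2*π*(v:ℝ)))⁻¹ * rexp (s*x + -(x-0)^2/(2*(v:ℝ))) := by
    rw [Real.exp_add]; ring
  have h2 : rexp ((v:ℝ)*s^2/2) * ((√(2*π*(v:ℝ)))⁻¹ * rexp (-(x-(v:ℝ)*s)^2/(2*(v:ℝ))))
      = (√(2*π*(v:ℝ)))⁻¹ * rexp ((v:ℝ)*s^2/2 + -(x-(v:ℝ)*s)^2/(2*(v:ℝ))) := by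
    rw [Real.exp_add]; ring
  rw [h1, h2]
  congr 1
  field_simp
  ring

lemma lintegral_exp_gauss {v : ℝ≥0} (hv : v ≠ 0) (s : ℝ) :
    ∫⁻ x, ENNReal.ofReal (rexp (s * x)) ∂(gaussianReal 0 v)
      = ENNReal.ofReal (rexp ((v:ℝ) * s^2 / 2)) := by
  rw [gaussianReal_of_var_ne_zero _ hv,
    lintegral_withDensity_eq_lintegral_mul _ (measurable_gaussianPDF _ _)
      (show Measurable fun x : ℝ => ENNReal.ofReal (rexp (s*x)) from (measurable_id.const_mul s).exp.ennreal_ofReal)]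
  have : ∀ x : ℝ, (gaussianPDF 0 v * fun x => ENNReal.ofReal (rexp (s * x))) x
      = ENNReal.ofReal (rexp ((v:ℝ) * s^2 / 2)) * gaussianPDF ((v:ℝ)*s) v x := by
    intro x
    simp only [Pi.mul_apply, gaussianPDF]
    rw [← ENNReal.ofReal_mul (gaussianPDFReal_nonneg _ _ _), ← ENNReal.ofReal_mul (exp_nonneg _),
      mul_comm (gaussianPDFReal 0 v x), gauss_pdf_shift hv]
  simp_rw [this]
  rw [lintegral_const_mul _ (measurable_gaussianPDF _ _), lintegral_gaussianPDF_eq_one _ hv,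
    mul_one]

lemma integrable_exp_gauss {v : ℝ≥0} (hv : v ≠ 0) (s : ℝ) :
    Integrable (fun x => rexp (s * x)) (gaussianReal 0 v) := by
  refine ⟨((measurable_id.const_mul s).exp).aestronglyMeasurable, ?_⟩
  rw [HasFiniteIntegral]
  have : ∀ x : ℝ, (‖rexp (s*x)‖ₑ : ℝ≥0∞) = ENNReal.ofReal (rexp (s*x)) := by
    intro x
    rw [← ofReal_norm, Real.norm_of_nonneg (exp_nonneg _)]
  simp_rw [this, lintegral_exp_gauss hv s]
  exact ENNReal.ofReal_lt_top

lemma integral_exp_gauss {v : ℝ≥0} (hv : v ≠ 0) (s : ℝ) :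
    ∫ x, rexp (s * x) ∂(gaussianReal 0 v) = rexp ((v:ℝ) * s^2 / 2) := by
  have h := lintegral_exp_gauss hv s
  rw [← ofReal_integral_eq_lintegral_ofReal (integrable_exp_gauss hv s)
    (ae_of_all _ fun x => exp_nonneg _)] at h
  exact (ENNReal.ofReal_eq_ofReal_iff (integral_nonneg fun x => exp_nonneg _)
    (exp_nonneg _)).mp h

lemma dv_bound {α : Type*} [MeasurableSpace α] (μ ν : Measure α) [IsProbabilityMeasure μ]
    [IsProbabilityMeasure ν] (hAC : μ ≪ ν) (hllr : Integrable (llr μ ν) μ)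
    (g : α → ℝ) (hg : Measurable g) (hgi : Integrable g μ) {K : ℝ} (hK : 0 < K)
    (hKint : ∫⁻ x, ENNReal.ofReal (rexp (g x)) ∂ν = ENNReal.ofReal K) :
    ∫ x, g x ∂μ - Real.log K ≤ ∫ x, llr μ ν x ∂μ := by
  set W : α → ℝ := fun x => g x - llr μ ν x with hW
  have hWmeas : Measurable W := hg.sub (measurable_llr μ ν)
  have hEWmeas : Measurable fun x => ENNReal.ofReal (rexp (W x)) :=
    hWmeas.exp.ennreal_ofReal
  -- step 1
  have hL : ∫⁻ x, ENNReal.ofReal (rexp (W x)) ∂μ ≤ ENNReal.ofReal K := by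
    have h1 : ∫⁻ x, ENNReal.ofReal (rexp (W x)) ∂μ
        = ∫⁻ x, (μ.rnDeriv ν * fun x => ENNReal.ofReal (rexp (W x))) x ∂ν := by
      conv_lhs => rw [← Measure.withDensity_rnDeriv_eq μ ν hAC]
      rw [lintegral_withDensity_eq_lintegral_mul ν (Measure.measurable_rnDeriv μ ν) hEWmeas]
    rw [h1, ← hKint]
    refine lintegral_mono_ae ?_
    filter_upwards [Measure.rnDeriv_lt_top μ ν] with x hlt
    simp only [Pi.mul_apply]
    by_cases h0 : μ.rnDeriv ν x = 0
    · simp [h0]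
    · have hr : 0 < (μ.rnDeriv ν x).toReal := ENNReal.toReal_pos h0 hlt.ne
      have hllrx : llr μ ν x = Real.log (μ.rnDeriv ν x).toReal := rfl
      have hfx : μ.rnDeriv ν x = ENNReal.ofReal (μ.rnDeriv ν x).toReal :=
        (ENNReal.ofReal_toReal hlt.ne).symm
      rw [hfx, ← ENNReal.ofReal_mul ENNReal.toReal_nonneg]
      refine le_of_eq (congrArg _ ?_)
      rw [hW]
      simp only [hllrx]
      rw [sub_eq_add_neg, Real.exp_add, Real.exp_neg, Real.exp_log hr]
      field_simp
  -- step 2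
  have hEWint : Integrable (fun x => rexp (W x)) μ := by
    refine ⟨hWmeas.exp.aestronglyMeasurable, ?_⟩
    rw [HasFiniteIntegral]
    have : ∀ x, (‖rexp (W x)‖ₑ : ℝ≥0∞) = ENNReal.ofReal (rexp (W x)) := fun x => by
      rw [← ofReal_norm, Real.norm_of_nonneg (exp_nonneg _)]
    simp_rw [this]
    exact lt_of_le_of_lt hL ENNReal.ofReal_lt_top
  -- step 3
  have hEW : ∫ x, rexp (W x) ∂μ ≤ K := by
    have h2 : ENNReal.ofReal (∫ x, rexp (W x) ∂μ) ≤ ENNReal.ofReal K := by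
      rw [ofReal_integral_eq_lintegral_ofReal hEWint (ae_of_all _ fun x => exp_nonneg _)]
      exact hL
    have h3 := ENNReal.toReal_mono ENNReal.ofReal_ne_top h2
    rwa [ENNReal.toReal_ofReal (integral_nonneg fun x => exp_nonneg _),
      ENNReal.toReal_ofReal hK.le] at h3
  -- step 4
  have hpt : ∀ x, W x ≤ rexp (W x) / K - 1 + Real.log K := by
    intro x
    have h4 := Real.log_le_sub_one_of_pos (div_pos (exp_pos (W x)) hK)
    rw [Real.log_div (exp_ne_zero _) hK.ne', Real.log_exp] at h4
    linarith
  -- step 5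
  have hWint : Integrable W μ := hgi.sub hllr
  have hRint : Integrable (fun x => rexp (W x) / K - 1 + Real.log K) μ :=
    (((hEWint.div_const K).sub (integrable_const 1)).add (integrable_const _))
  have h5 : ∫ x, W x ∂μ ≤ Real.log K := by
    have h6 := integral_mono hWint hRint hpt
    have h8 : ∫ x, (rexp (W x) / K - 1 + Real.log K) ∂μ
        = (∫ x, rexp (W x) ∂μ) / K - 1 + Real.log K := by
      have hint0 : Integrable (fun x => rexp (W x) / K) μ := hEWint.div_const K
      have hint1 : Integrable (fun x => rexp (W x) / K - 1) μ := hint0.sub (integrable_const 1)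
      rw [integral_add hint1 (integrable_const _), integral_sub hint0 (integrable_const 1),
        integral_div K (fun x => rexp (W x)), integral_const, integral_const]
      simp
    rw [h8] at h6
    have h7 : (∫ x, rexp (W x) ∂μ) / K ≤ 1 := by
      rw [div_le_one hK]; exact hEW
    linarith
  rw [hW] at h5
  rw [integral_sub hgi hllr] at h5
  linarith

lemma integrable_dirac' {f : ℝ → ℝ} (hf : Measurable f) (c : ℝ) :
    Integrable f (Measure.dirac c) := by
  refine ⟨hf.aestronglyMeasurable, ?_⟩
  rw [HasFiniteIntegral, lintegral_dirac]
  exact ENNReal.coe_lt_top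

lemma lintegral_half_diracs (c d : ℝ) (f : ℝ → ℝ≥0∞) :
    ∫⁻ x, f x ∂((1/2 : ℝ≥0∞) • (Measure.dirac c + Measure.dirac d))
      = (1/2 : ℝ≥0∞) * (f c + f d) := by
  rw [lintegral_smul_measure, lintegral_add_measure, lintegral_dirac, lintegral_dirac, smul_eq_mul]

lemma integral_half_diracs (c d : ℝ) {f : ℝ → ℝ} (hf : Measurable f) :
    ∫ x, f x ∂((1/2 : ℝ≥0∞) • (Measure.dirac c + Measure.dirac d)) = (f c + f d) / 2 := by
  rw [integral_smul_measure, integral_add_measure (integrable_dirac' hf c)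
    (integrable_dirac' hf d), integral_dirac, integral_dirac]
  simp only [ENNReal.toReal_div, ENNReal.toReal_one, ENNReal.toReal_ofNat, smul_eq_mul]
  ring

/-- **Tightness of the Gaussian-mechanism mutual information bound.**
There are constants `C > 0` and `β₀ > 0` such that for all `Δ, σ > 0` with
`β := Δ²/(2σ²) ≤ β₀`, if `X` is uniform on `{−Δ/2, Δ/2}` and `Y = X + Z` with
`Z ~ N(0, σ²)` independent of `X`, then `I(X ; Y) ≥ β/4 − C β²`. -/
theorem gaussian_mechanism_mi_tight :
    ∃ C > (0 : ℝ), ∃ β₀ > (0 : ℝ),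
      ∀ (Δ σ : ℝ), 0 < Δ → 0 < σ → Δ ^ 2 / (2 * σ ^ 2) ≤ β₀ →
        ∀ {Ω : Type*} [MeasurableSpace Ω] (P : Measure Ω), IsProbabilityMeasure P →
          ∀ (X Z : Ω → ℝ), Measurable X → Measurable Z →
            P.map X = (1 / 2 : ℝ≥0∞) • (Measure.dirac (-(Δ / 2)) + Measure.dirac (Δ / 2)) →
            P.map Z = gaussianReal 0 (σ ^ 2).toNNReal →
            IndepFun X Z P →
            ENNReal.ofReal (Δ ^ 2 / (2 * σ ^ 2) / 4 - C * (Δ ^ 2 / (2 * σ ^ 2)) ^ 2)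
              ≤ mutualInfo P X (fun ω => X ω + Z ω) := by
  refine ⟨1/8, by norm_num, 1, by norm_num, ?_⟩
  intro Δ σ hΔ hσ _hβ Ω _ P hP X Z hX hZ hmapX hmapZ hindep
  have hσ2 : (0:ℝ) < σ^2 := by positivity
  have hV : ((σ^2).toNNReal : ℝ) = σ^2 := Real.coe_toNNReal _ hσ2.le
  have hVne : (σ^2).toNNReal ≠ 0 := (Real.toNNReal_pos.mpr hσ2).ne'
  set b : ℝ := Δ^2/(2*σ^2) with hb
  have hbpos : 0 < b := by rw [hb]; positivity
  set Y : Ω → ℝ := fun ω => X ω + Z ω with hYdef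
  have hY : Measurable Y := hX.add hZ
  have hpair : Measurable fun ω => (X ω, Y ω) := hX.prodMk hY
  set μ := P.map (fun ω => (X ω, Y ω)) with hμdef
  set ν := (P.map X).prod (P.map Y) with hνdef
  haveI : IsProbabilityMeasure μ := Measure.isProbabilityMeasure_map hpair.aemeasurable
  haveI : IsProbabilityMeasure (P.map X) := Measure.isProbabilityMeasure_map hX.aemeasurable
  haveI : IsProbabilityMeasure (P.map Y) := Measure.isProbabilityMeasure_map hY.aemeasurable
  haveI : IsProbabilityMeasure ν := by rw [hνdef]; infer_instance
  have hMI : mutualInfo P X (fun ω => X ω + Z ω) = klDiv μ ν := rfl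
  rw [hMI]
  unfold klDiv
  split_ifs with hc
  swap
  · exact le_top
  obtain ⟨hAC, hllr⟩ := hc
  -- a.e. two-point support of X
  have hms : MeasurableSet ({-(Δ/2), Δ/2} : Set ℝ) :=
    (measurableSet_singleton _).insert _
  have hXe : ∀ᵐ ω ∂P, X ω = -(Δ/2) ∨ X ω = Δ/2 := by
    have h0 : P.map X ({-(Δ/2), Δ/2}ᶜ : Set ℝ) = 0 := by
      rw [hmapX]
      simp only [Measure.smul_apply, Measure.add_apply, smul_eq_mul]
      rw [Measure.dirac_apply' _ hms.compl, Measure.dirac_apply' _ hms.compl]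
      simp
    rw [Measure.map_apply hX hms.compl] at h0
    have h1 : ∀ᵐ ω ∂P, X ω ∈ ({-(Δ/2), Δ/2} : Set ℝ) := by
      rw [ae_iff]
      convert h0 using 2
      rfl
    exact h1.mono fun ω h => by simpa using h
  have hXsq : (fun ω => X ω * X ω) =ᵐ[P] fun _ => Δ^2/4 := by
    filter_upwards [hXe] with ω h
    rcases h with h | h <;> rw [h] <;> ring
  have hXabs : ∀ᵐ ω ∂P, ‖X ω‖ ≤ Δ/2 := by
    filter_upwards [hXe] with ω h
    rcases h with h | h <;> rw [h] <;> simp [abs_of_pos hΔ, le_refl]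
  -- integrability of Z
  have hZint : Integrable Z P := by
    have h1 : Integrable (fun x : ℝ => x) (gaussianReal 0 (σ^2).toNNReal) := by
      have h2 := (integrable_exp_gauss hVne 1).add (integrable_exp_gauss hVne (-1))
      refine h2.mono' measurable_id.aestronglyMeasurable (ae_of_all _ fun x => ?_)
      rw [Real.norm_eq_abs]
      have e1 := Real.add_one_le_exp (1 * x)
      have e2 := Real.add_one_le_exp ((-1) * x)
      have e3 := Real.exp_pos (1 * x)
      have e4 := Real.exp_pos ((-1) * x)
      simp only [Pi.add_apply]
      rcases abs_cases x with ⟨h5, _⟩ | ⟨h5, _⟩ <;> rw [h5] <;> nlinarith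
    have h3 : Integrable (fun x : ℝ => x) (P.map Z) := hmapZ ▸ h1
    exact (integrable_map_measure aestronglyMeasurable_id hZ.aemeasurable).mp h3
  have hXint : Integrable X P :=
    (integrable_const (Δ/2)).mono' hX.aestronglyMeasurable hXabs
  have hXXint : Integrable (fun ω => X ω * X ω) P :=
    (integrable_const (Δ^2/4)).congr hXsq.symm
  have hXZint : Integrable (fun ω => X ω * Z ω) P := by
    refine (hZint.abs.const_mul (Δ/2)).mono' (hX.mul hZ).aestronglyMeasurable ?_
    filter_upwards [hXabs] with ω h
    rw [Real.norm_eq_abs, abs_mul]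
    have h' : |X ω| ≤ Δ/2 := h
    nlinarith [abs_nonneg (Z ω), abs_nonneg (X ω)]
  have hXYint : Integrable (fun ω => X ω * Y ω) P := by
    have : (fun ω => X ω * Y ω) = fun ω => X ω * X ω + X ω * Z ω := by
      funext ω; simp only [hYdef]; ring
    rw [this]; exact hXXint.add hXZint
  -- the test function g
  set g : ℝ × ℝ → ℝ := fun p => p.1 * p.2 / σ^2 with hgdef
  have hg : Measurable g := (measurable_fst.mul measurable_snd).div_const _
  have hgμ : Integrable g μ := by
    rw [hμdef]
    refine (integrable_map_measure hg.aestronglyMeasurable hpair.aemeasurable).mpr ?_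
    exact hXYint.div_const _
  -- expectations
  have EX : ∫ ω, X ω ∂P = 0 := by
    have h1 : ∫ ω, X ω ∂P = ∫ x, x ∂(P.map X) :=
      (integral_map hX.aemeasurable aestronglyMeasurable_id).symm
    rw [h1, hmapX, integral_half_diracs _ _ measurable_id']
    ring
  have EXZ : ∫ ω, X ω * Z ω ∂P = 0 := by
    have h1 := hindep.integral_mul_eq_mul_integral hXint.aestronglyMeasurable hZint.aestronglyMeasurable
    have h2 : ∫ ω, X ω * Z ω ∂P = ∫ ω, (X * Z) ω ∂P := rfl
    rw [h2, h1, EX, zero_mul]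
  have hgval : ∫ p, g p ∂μ = b/2 := by
    rw [hμdef, integral_map hpair.aemeasurable hg.aestronglyMeasurable]
    have h1 : (fun ω => g (X ω, Y ω)) = fun ω => (X ω * X ω + X ω * Z ω) / σ^2 := by
      funext ω; simp only [hgdef, hYdef]; ring
    rw [h1, integral_div]
    rw [integral_add hXXint hXZint, integral_congr_ae hXsq, integral_const, EXZ]
    simp only [probReal_univ, ENNReal.toReal_one, smul_eq_mul, one_mul, add_zero]
    rw [hb]; ring
  -- the exponential moment
  set K : ℝ := rexp (b/4) * Real.cosh (b/2) with hKdef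
  have hK : 0 < K := by positivity
  have hKint : ∫⁻ p, ENNReal.ofReal (rexp (g p)) ∂ν = ENNReal.ofReal K := by
    have hgm : Measurable fun p : ℝ × ℝ => ENNReal.ofReal (rexp (g p)) :=
      hg.exp.ennreal_ofReal
    rw [hνdef, lintegral_prod _ hgm.aemeasurable]
    have hJ : ∀ x : ℝ, x = -(Δ/2) ∨ x = Δ/2 →
        ∫⁻ y, ENNReal.ofReal (rexp (g (x, y))) ∂(P.map Y) = ENNReal.ofReal K := by
      intro x hx
      set s : ℝ := x/σ^2 with hsdef
      have hx2 : x^2 = Δ^2/4 := by rcases hx with h | h <;> rw [h] <;> ring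
      have hsmul : ∀ y, g (x, y) = s * y := fun y => by
        simp only [hgdef, hsdef]; ring
      simp_rw [hsmul]
      have hm : Measurable fun u : ℝ => ENNReal.ofReal (rexp (s * u)) :=
        (measurable_id.const_mul s).exp.ennreal_ofReal
      rw [lintegral_map hm hY]
      have hsplit : ∀ ω, ENNReal.ofReal (rexp (s * Y ω))
          = ENNReal.ofReal (rexp (s * X ω)) * ENNReal.ofReal (rexp (s * Z ω)) := by
        intro ω
        rw [← ENNReal.ofReal_mul (exp_nonneg _), ← Real.exp_add]
        congr 2
        simp only [hYdef]; ring
      simp_rw [hsplit]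
      have hprod := lintegral_mul_eq_lintegral_mul_lintegral_of_indepFun''
        (μ := P) (f := fun ω => ENNReal.ofReal (rexp (s * X ω)))
        (g := fun ω => ENNReal.ofReal (rexp (s * Z ω)))
        ((hm.comp hX).aemeasurable) ((hm.comp hZ).aemeasurable)
        (hindep.comp hm hm)
      rw [hprod]
      beta_reduce
      rw [← lintegral_map hm hX, ← lintegral_map hm hZ, hmapX, hmapZ,
        lintegral_half_diracs, lintegral_exp_gauss hVne s]
      have hhalf : (1/2 : ℝ≥0∞) = ENNReal.ofReal (1/2) := by
        rw [ENNReal.ofReal_div_of_pos (by norm_num)]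
        norm_num
      rw [hhalf, ← ENNReal.ofReal_add (exp_nonneg _) (exp_nonneg _),
        ← ENNReal.ofReal_mul (by norm_num), ← ENNReal.ofReal_mul (by positivity)]
      congr 1
      have hvar : ((σ^2).toNNReal : ℝ) * s^2/2 = b/4 := by
        rw [hV, hsdef, hb]
        field_simp
        nlinarith [hx2]
      have hcosh : (rexp (s * -(Δ/2)) + rexp (s * (Δ/2)))/2 = Real.cosh (b/2) := by
        rcases hx with h | h <;> rw [hsdef, h, Real.cosh_eq]
        · have e1 : -(Δ/2)/σ^2 * -(Δ/2) = b/2 := by rw [hb]; field_simp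
          have e2 : -(Δ/2)/σ^2 * (Δ/2) = -(b/2) := by rw [hb]; field_simp
          rw [e1, e2]
        · have e1 : (Δ/2)/σ^2 * -(Δ/2) = -(b/2) := by rw [hb]; field_simp
          have e2 : (Δ/2)/σ^2 * (Δ/2) = b/2 := by rw [hb]; field_simp
          rw [e1, e2]; ring
      rw [hvar, hKdef, ← hcosh]
      ring
    rw [hmapX, lintegral_half_diracs]
    rw [show (∫⁻ y, ENNReal.ofReal (rexp (g (-(Δ/2), y))) ∂(P.map Y)) = ENNReal.ofReal K
        from hJ _ (Or.inl rfl),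
      show (∫⁻ y, ENNReal.ofReal (rexp (g (Δ/2, y))) ∂(P.map Y)) = ENNReal.ofReal K
        from hJ _ (Or.inr rfl)]
    rw [← two_mul, ← mul_assoc]
    rw [one_div, ENNReal.inv_mul_cancel (by norm_num) (by norm_num), one_mul]
  -- conclude via Donsker–Varadhan
  have hdv := dv_bound μ ν hAC hllr g hg hgμ hK hKint
  rw [hgval] at hdv
  have hlogK : Real.log K ≤ b/4 + b^2/8 := by
    rw [hKdef, Real.log_mul (Real.exp_ne_zero _) (Real.cosh_pos _).ne', Real.log_exp]
    have h1 : Real.cosh (b/2) ≤ rexp ((b/2)^2/2) := Real.cosh_le_exp_half_sq _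
    have h2 := Real.log_le_log (Real.cosh_pos _) h1
    rw [Real.log_exp] at h2
    nlinarith
  apply ENNReal.ofReal_le_ofReal
  linarith
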